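/- Let a < b be real numbers and let Z = L¹((a,b),ℂ) be the Banach space of Lebesgue-integrable complex-valued functions on (a,b) with norm ‖g‖ = ∫_a^b |g(t)| dt, and let 𝒥 : Z → Z be the bounded linear operator sending g to the function x ↦ ∫_a^x g(t) dt. Then for every z ∈ ℂ with z ≠ 0, the operator z·id − 𝒥 : Z → Z has a bounded linear inverse, and this inverse satisfies ‖(z·id − 𝒥)^{-1}‖ ≤ (1/|z|)·exp((b−a)/|z|). -/

import Mathlib

open MeasureTheory
open scoped ENNReal NNReal

private lemma volterra_step (a b : ℝ) (hab : a < b) (k : ℕ) (g : ℝ → ℂ)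
    (hgm : StronglyMeasurable g) :
    (∫⁻ x in Set.Ioo a b, ENNReal.ofReal ((b - x) ^ k / (Nat.factorial k : ℝ)) *
        (‖∫ t in a..x, g t‖₊ : ℝ≥0∞)) ≤
      ∫⁻ t in Set.Ioo a b, ENNReal.ofReal ((b - t) ^ (k + 1) / (Nat.factorial (k + 1) : ℝ)) *
        (‖g t‖₊ : ℝ≥0∞) := by
  set μ := volume.restrict (Set.Ioo a b) with hμdef
  set nn : ℝ → ℝ≥0∞ := fun t => (‖g t‖₊ : ℝ≥0∞) with hnn
  have hnn_meas : Measurable nn := hgm.measurable.nnnorm.coe_nnreal_ennreal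
  set G : ℝ × ℝ → ℝ≥0∞ := fun p =>
    Set.indicator {q : ℝ × ℝ | q.2 ≤ q.1}
      (fun q => ENNReal.ofReal ((b - q.1) ^ k / (Nat.factorial k : ℝ)) * nn q.2) p with hG
  have hGmeas : Measurable G := by
    apply Measurable.indicator
    · exact (((measurable_const.sub measurable_fst).pow_const k).div_const
        _).ennreal_ofReal.mul (hnn_meas.comp measurable_snd)
    · exact measurableSet_le measurable_snd measurable_fst
  have step1 : (∫⁻ x in Set.Ioo a b, ENNReal.ofReal ((b - x) ^ k / (Nat.factorial k : ℝ)) *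
      (‖∫ t in a..x, g t‖₊ : ℝ≥0∞)) ≤ ∫⁻ x, ∫⁻ t, G (x, t) ∂μ ∂μ := by
    refine lintegral_mono_ae ((ae_restrict_mem measurableSet_Ioo).mono fun x hx => ?_)
    have h1 : (‖∫ t in a..x, g t‖₊ : ℝ≥0∞) ≤ ∫⁻ t in Set.Ioc a x, nn t ∂volume := by
      rw [intervalIntegral.integral_of_le hx.1.le]
      exact enorm_integral_le_lintegral_enorm _
    have hset : Set.Iic x ∩ Set.Ioo a b = Set.Ioc a x := by
      ext t
      simp only [Set.mem_inter_iff, Set.mem_Iic, Set.mem_Ioo, Set.mem_Ioc]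
      exact ⟨fun h => ⟨h.2.1, h.1⟩, fun h => ⟨h.2, h.1, lt_of_le_of_lt h.2 hx.2⟩⟩
    have h2 : ∫⁻ t in Set.Ioc a x, nn t ∂volume = ∫⁻ t, (Set.Iic x).indicator nn t ∂μ := by
      rw [lintegral_indicator measurableSet_Iic, hμdef,
        Measure.restrict_restrict measurableSet_Iic, hset]
    calc ENNReal.ofReal ((b - x) ^ k / (Nat.factorial k : ℝ)) * (‖∫ t in a..x, g t‖₊ : ℝ≥0∞)
        ≤ ENNReal.ofReal ((b - x) ^ k / (Nat.factorial k : ℝ)) *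
            ∫⁻ t, (Set.Iic x).indicator nn t ∂μ := by
          rw [← h2]; exact mul_le_mul_right h1 _
      _ = ∫⁻ t, ENNReal.ofReal ((b - x) ^ k / (Nat.factorial k : ℝ)) *
            (Set.Iic x).indicator nn t ∂μ :=
          (lintegral_const_mul' _ _ ENNReal.ofReal_ne_top).symm
      _ = ∫⁻ t, G (x, t) ∂μ := by
          refine lintegral_congr fun t => ?_
          by_cases h : t ≤ x
          · simp [hG, Set.indicator_apply, h]
          · simp [hG, Set.indicator_apply, h]
  have huncurry : Function.uncurry (fun x t => G (x, t)) = G := by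
    funext p; cases p; rfl
  have step2 : (∫⁻ x, ∫⁻ t, G (x, t) ∂μ ∂μ) = ∫⁻ t, ∫⁻ x, G (x, t) ∂μ ∂μ :=
    lintegral_lintegral_swap (by rw [huncurry]; exact hGmeas.aemeasurable)
  have step3 : (∫⁻ t, ∫⁻ x, G (x, t) ∂μ ∂μ) ≤
      ∫⁻ t in Set.Ioo a b, ENNReal.ofReal ((b - t) ^ (k + 1) / (Nat.factorial (k + 1) : ℝ)) *
        (‖g t‖₊ : ℝ≥0∞) := by
    refine lintegral_mono_ae ((ae_restrict_mem measurableSet_Ioo).mono fun t ht => ?_)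
    have hset : Set.Ici t ∩ Set.Ioo a b = Set.Ico t b := by
      ext x
      simp only [Set.mem_inter_iff, Set.mem_Ici, Set.mem_Ioo, Set.mem_Ico]
      exact ⟨fun h => ⟨h.1, h.2.2⟩, fun h => ⟨h.1, lt_of_lt_of_le ht.1 h.1, h.2⟩⟩
    have h1 : ∀ x, G (x, t) =
        (Set.Ici t).indicator (fun x => ENNReal.ofReal ((b - x) ^ k / (Nat.factorial k : ℝ))) x
          * nn t := by
      intro x
      by_cases h : t ≤ x
      · simp [hG, Set.indicator_apply, h]
      · simp [hG, Set.indicator_apply, h]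
    have h2 : (∫⁻ x, G (x, t) ∂μ) =
        (∫⁻ x in Set.Ico t b, ENNReal.ofReal ((b - x) ^ k / (Nat.factorial k : ℝ)) ∂volume)
          * nn t := by
      simp_rw [h1]
      rw [lintegral_mul_const' _ _ ENNReal.coe_ne_top,
        lintegral_indicator measurableSet_Ici, hμdef,
        Measure.restrict_restrict measurableSet_Ici, hset]
    have hkey : (∫⁻ x in Set.Ico t b,
        ENNReal.ofReal ((b - x) ^ k / (Nat.factorial k : ℝ)) ∂volume)
        = ENNReal.ofReal ((b - t) ^ (k + 1) / (Nat.factorial (k + 1) : ℝ)) := by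
      have hcont : Continuous fun x : ℝ => (b - x) ^ k / (Nat.factorial k : ℝ) :=
        ((continuous_const.sub continuous_id).pow k).div_const _
      have hint : IntegrableOn (fun x : ℝ => (b - x) ^ k / (Nat.factorial k : ℝ))
          (Set.Ico t b) volume :=
        (hcont.continuousOn.integrableOn_Icc).mono_set Set.Ico_subset_Icc_self
      have hnneg : 0 ≤ᵐ[volume.restrict (Set.Ico t b)]
          fun x : ℝ => (b - x) ^ k / (Nat.factorial k : ℝ) := by
        refine (ae_restrict_mem measurableSet_Ico).mono fun x hx => ?_
        have hbx : (0:ℝ) ≤ b - x := by linarith [hx.2]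
        positivity
      rw [← ofReal_integral_eq_lintegral_ofReal hint hnneg]
      congr 1
      have hIoo : (∫ x in Set.Ico t b, (b - x) ^ k / (Nat.factorial k : ℝ))
          = ∫ x in t..b, (b - x) ^ k / (Nat.factorial k : ℝ) := by
        rw [integral_Ico_eq_integral_Ioo, ← integral_Ioc_eq_integral_Ioo,
          ← intervalIntegral.integral_of_le ht.2.le]
      rw [hIoo, intervalIntegral.integral_div,
        intervalIntegral.integral_comp_sub_left (fun x => x ^ k) b, sub_self, integral_pow,
        zero_pow (Nat.succ_ne_zero k)]
      have hk : (Nat.factorial k : ℝ) ≠ 0 := Nat.cast_ne_zero.mpr (Nat.factorial_ne_zero k)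
      have hk1 : ((k : ℝ) + 1) ≠ 0 := by positivity
      rw [Nat.factorial_succ]
      push_cast
      field_simp
      rw [sub_zero]
    rw [h2, hkey]
  exact le_trans step1 (le_trans (le_of_eq step2) step3)

set_option maxHeartbeats 1000000 in
/-- on `Z = L¹((a,b), ℂ)`, the Volterra operator
`𝒥 g = (x ↦ ∫_a^x g(t) dt)` has, for every `z ≠ 0`, a bounded resolvent
`(z·id − 𝒥)⁻¹` with `‖(z·id − 𝒥)⁻¹‖ ≤ (1/|z|)·exp((b−a)/|z|)`. -/
theorem stmt_0 (a b : ℝ) (hab : a < b)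
    (J : Lp ℂ 1 (volume.restrict (Set.Ioo a b)) →L[ℂ] Lp ℂ 1 (volume.restrict (Set.Ioo a b)))
    (hJ : ∀ g : Lp ℂ 1 (volume.restrict (Set.Ioo a b)),
      (J g : ℝ → ℂ) =ᵐ[volume.restrict (Set.Ioo a b)]
        fun x => ∫ t in a..x, (g : ℝ → ℂ) t)
    (z : ℂ) (hz : z ≠ 0) :
    ∃ T : Lp ℂ 1 (volume.restrict (Set.Ioo a b)) →L[ℂ]
          Lp ℂ 1 (volume.restrict (Set.Ioo a b)),
      (∀ g, T (z • g - J g) = g) ∧ (∀ g, z • T g - J (T g) = g) ∧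
      ‖T‖ ≤ 1 / ‖z‖ * Real.exp ((b - a) / ‖z‖) := by
  -- norm on L¹ as a lintegral
  have norm_eq : ∀ f : Lp ℂ 1 (volume.restrict (Set.Ioo a b)), ‖f‖ = (∫⁻ x, (‖f x‖₊ : ℝ≥0∞) ∂(volume.restrict (Set.Ioo a b))).toReal := fun f => by
    rw [Lp.norm_def, eLpNorm_one_eq_lintegral_enorm]; rfl
  have fin : ∀ f : Lp ℂ 1 (volume.restrict (Set.Ioo a b)), (∫⁻ x, (‖f x‖₊ : ℝ≥0∞) ∂(volume.restrict (Set.Ioo a b))) ≠ ⊤ := fun f => by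
    have := Lp.eLpNorm_ne_top f; rw [eLpNorm_one_eq_lintegral_enorm] at this; exact this
  -- the weighted-norm estimate for one application of J
  have stepLp : ∀ (k : ℕ) (g : Lp ℂ 1 (volume.restrict (Set.Ioo a b))),
      (∫⁻ x, ENNReal.ofReal ((b - x) ^ k / (Nat.factorial k : ℝ)) * (‖(J g) x‖₊ : ℝ≥0∞) ∂(volume.restrict (Set.Ioo a b)))
        ≤ ∫⁻ x, ENNReal.ofReal ((b - x) ^ (k + 1) / (Nat.factorial (k + 1) : ℝ))
            * (‖g x‖₊ : ℝ≥0∞) ∂(volume.restrict (Set.Ioo a b)) := by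
    intro k g
    have hcong : (fun x => ENNReal.ofReal ((b - x) ^ k / (Nat.factorial k : ℝ))
        * (‖(J g) x‖₊ : ℝ≥0∞)) =ᵐ[volume.restrict (Set.Ioo a b)]
        fun x => ENNReal.ofReal ((b - x) ^ k / (Nat.factorial k : ℝ))
          * (‖∫ t in a..x, (g : ℝ → ℂ) t‖₊ : ℝ≥0∞) :=
      (hJ g).mono fun x hx => by dsimp only; rw [hx]
    rw [lintegral_congr_ae hcong]
    exact volterra_step a b hab k _ (Lp.stronglyMeasurable g)
  -- iterate
  have claim : ∀ (n : ℕ) (g : Lp ℂ 1 (volume.restrict (Set.Ioo a b))) (k : ℕ),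
      (∫⁻ x, ENNReal.ofReal ((b - x) ^ k / (Nat.factorial k : ℝ))
        * (‖((J ^ n) g) x‖₊ : ℝ≥0∞) ∂(volume.restrict (Set.Ioo a b)))
        ≤ ∫⁻ x, ENNReal.ofReal ((b - x) ^ (k + n) / (Nat.factorial (k + n) : ℝ))
            * (‖g x‖₊ : ℝ≥0∞) ∂(volume.restrict (Set.Ioo a b)) := by
    intro n
    induction n with
    | zero =>
      intro g k
      simp only [pow_zero, ContinuousLinearMap.one_apply, Nat.add_zero]
      exact le_rfl
    | succ n ih =>
      intro g k
      have h1 : (J ^ (n + 1)) g = (J ^ n) (J g) := by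
        rw [pow_succ, ContinuousLinearMap.mul_apply]
      rw [h1]
      refine le_trans (ih (J g) k) ?_
      have h2 : k + (n + 1) = (k + n) + 1 := by omega
      rw [h2]
      exact stepLp (k + n) g
  -- norm bound on J^n
  have hJn : ∀ n : ℕ, ‖J ^ n‖ ≤ (b - a) ^ n / (Nat.factorial n : ℝ) := by
    intro n
    have hc : (0:ℝ) ≤ (b - a) ^ n / (Nat.factorial n : ℝ) := div_nonneg (pow_nonneg (by linarith) n) (Nat.cast_nonneg _)
    refine ContinuousLinearMap.opNorm_le_bound _ hc fun g => ?_
    have h0 : (∫⁻ x, (‖((J ^ n) g) x‖₊ : ℝ≥0∞) ∂(volume.restrict (Set.Ioo a b)))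
        ≤ ∫⁻ x, ENNReal.ofReal ((b - x) ^ (0 + n) / (Nat.factorial (0 + n) : ℝ))
            * (‖g x‖₊ : ℝ≥0∞) ∂(volume.restrict (Set.Ioo a b)) := by
      have := claim n g 0
      simpa [Nat.factorial] using this
    have h1 : (∫⁻ x, ENNReal.ofReal ((b - x) ^ (0 + n) / (Nat.factorial (0 + n) : ℝ))
          * (‖g x‖₊ : ℝ≥0∞) ∂(volume.restrict (Set.Ioo a b)))
        ≤ ∫⁻ x, ENNReal.ofReal ((b - a) ^ n / (Nat.factorial n : ℝ))
            * (‖g x‖₊ : ℝ≥0∞) ∂(volume.restrict (Set.Ioo a b)) := by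
      refine lintegral_mono_ae ((ae_restrict_mem measurableSet_Ioo).mono fun x hx => ?_)
      have hle : (b - x) ^ (0 + n) / (Nat.factorial (0 + n) : ℝ)
          ≤ (b - a) ^ n / (Nat.factorial n : ℝ) := by
        rw [Nat.zero_add]
        have hbx : (0:ℝ) ≤ b - x := by linarith [hx.2]
        gcongr <;> linarith [hx.1]
      exact mul_le_mul_left (ENNReal.ofReal_le_ofReal hle) _
    have h2 : (∫⁻ x, ENNReal.ofReal ((b - a) ^ n / (Nat.factorial n : ℝ))
          * (‖g x‖₊ : ℝ≥0∞) ∂(volume.restrict (Set.Ioo a b)))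
        = ENNReal.ofReal ((b - a) ^ n / (Nat.factorial n : ℝ))
          * ∫⁻ x, (‖g x‖₊ : ℝ≥0∞) ∂(volume.restrict (Set.Ioo a b)) :=
      lintegral_const_mul' _ _ ENNReal.ofReal_ne_top
    calc ‖(J ^ n) g‖ = (∫⁻ x, (‖((J ^ n) g) x‖₊ : ℝ≥0∞) ∂(volume.restrict (Set.Ioo a b))).toReal := norm_eq _
      _ ≤ (ENNReal.ofReal ((b - a) ^ n / (Nat.factorial n : ℝ))
            * ∫⁻ x, (‖g x‖₊ : ℝ≥0∞) ∂(volume.restrict (Set.Ioo a b))).toReal := by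
          refine ENNReal.toReal_mono (ENNReal.mul_ne_top ENNReal.ofReal_ne_top (fin g)) ?_
          exact le_trans h0 (le_trans h1 (le_of_eq h2))
      _ = (b - a) ^ n / (Nat.factorial n : ℝ) * ‖g‖ := by
          rw [ENNReal.toReal_mul, ENNReal.toReal_ofReal hc, norm_eq g]
  -- the resolvent series
  have habs : (0:ℝ) < ‖z‖ := norm_pos_iff.mpr hz
  set A := z • (1 : Lp ℂ 1 (volume.restrict (Set.Ioo a b)) →L[ℂ]
      Lp ℂ 1 (volume.restrict (Set.Ioo a b))) - J with hAdef
  set f : ℕ → (Lp ℂ 1 (volume.restrict (Set.Ioo a b)) →L[ℂ]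
      Lp ℂ 1 (volume.restrict (Set.Ioo a b))) := fun n => z⁻¹ ^ (n + 1) • J ^ n with hfdef
  set u : ℕ → (Lp ℂ 1 (volume.restrict (Set.Ioo a b)) →L[ℂ]
      Lp ℂ 1 (volume.restrict (Set.Ioo a b))) := fun n => z⁻¹ ^ n • J ^ n with hudef
  set c : ℕ → ℝ :=
    fun n => ‖z‖⁻¹ * (((b - a) / ‖z‖) ^ n / (Nat.factorial n : ℝ))
    with hcdef
  have hfc : ∀ n, ‖f n‖ ≤ c n := by
    intro n
    calc ‖f n‖ = ‖z‖⁻¹ ^ (n + 1) * ‖J ^ n‖ := by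
          simp only [hfdef]
          rw [norm_smul (z⁻¹ ^ (n + 1)) (J ^ n), norm_pow, norm_inv]
      _ ≤ ‖z‖⁻¹ ^ (n + 1) * ((b - a) ^ n / (Nat.factorial n : ℝ)) :=
          mul_le_mul_of_nonneg_left (hJn n) (by positivity)
      _ = c n := by
          simp only [hcdef]
          rw [div_eq_mul_inv (b - a) ‖z‖, mul_pow]
          ring
  have hcsum : Summable c := by
    simp only [hcdef]
    exact (Real.summable_pow_div_factorial ((b - a) / ‖z‖)).mul_left _
  have hnorm_sum : Summable fun n => ‖f n‖ :=
    Summable.of_nonneg_of_le (fun n => norm_nonneg _) hfc hcsum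
  have hfsum : Summable f := hnorm_sum.of_norm
  set T := ∑' n, f n with hTdef
  have hT : HasSum f T := hfsum.hasSum
  have hTnorm : ‖T‖ ≤ 1 / ‖z‖ * Real.exp ((b - a) / ‖z‖) := by
    have h1 : ‖T‖ ≤ ∑' n, ‖f n‖ := norm_tsum_le_tsum_norm hnorm_sum
    have h2 : (∑' n, ‖f n‖) ≤ ∑' n, c n := Summable.tsum_le_tsum hfc hnorm_sum hcsum
    have h3 : (∑' n, c n) = 1 / ‖z‖ * Real.exp ((b - a) / ‖z‖) := by
      simp only [hcdef]
      rw [tsum_mul_left, Real.exp_eq_exp_ℝ, NormedSpace.exp_eq_tsum_div, one_div]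
    linarith
  have hcommJ : ∀ n : ℕ, J ^ n * A = A * J ^ n := by
    intro n
    simp only [hAdef]
    rw [mul_sub, sub_mul, mul_smul_comm, smul_mul_assoc, one_mul, mul_one,
      ← pow_succ, ← pow_succ']
  have hzz : ∀ n : ℕ, z⁻¹ ^ (n + 1) * z = z⁻¹ ^ n := fun n => by
    rw [pow_succ, mul_assoc, inv_mul_cancel₀ hz, mul_one]
  have key_tel : ∀ n : ℕ, A * f n = u n - u (n + 1) := by
    intro n
    simp only [hAdef, hfdef, hudef]
    rw [sub_mul, smul_mul_assoc, one_mul, smul_smul, mul_smul_comm, ← pow_succ',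
      mul_comm z, hzz n]
  have hcomm_fA : ∀ n : ℕ, f n * A = A * f n := by
    intro n
    simp only [hfdef]
    rw [smul_mul_assoc, hcommJ n, mul_smul_comm]
  have hu0 : u 0 = 1 := by
    simp only [hudef]
    simp
  have hu_tend : Filter.Tendsto u Filter.atTop (nhds 0) := by
    have hb : ∀ n, ‖u n‖ ≤ ((b - a) / ‖z‖) ^ n / (Nat.factorial n : ℝ) := by
      intro n
      calc ‖u n‖ = ‖z‖⁻¹ ^ n * ‖J ^ n‖ := by
            simp only [hudef]
            rw [norm_smul (z⁻¹ ^ n) (J ^ n), norm_pow, norm_inv]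
        _ ≤ ‖z‖⁻¹ ^ n * ((b - a) ^ n / (Nat.factorial n : ℝ)) :=
            mul_le_mul_of_nonneg_left (hJn n) (by positivity)
        _ = ((b - a) / ‖z‖) ^ n / (Nat.factorial n : ℝ) := by
            rw [div_eq_mul_inv (b - a) ‖z‖, mul_pow]; ring
    exact squeeze_zero_norm hb (Real.summable_pow_div_factorial _).tendsto_atTop_zero
  have htel : Filter.Tendsto (fun N => ∑ i ∈ Finset.range N, (A * f i))
      Filter.atTop (nhds 1) := by
    have heq : (fun N => ∑ i ∈ Finset.range N, (A * f i)) = fun N => u 0 - u N := by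
      funext N
      rw [← Finset.sum_range_sub' u N]
      exact Finset.sum_congr rfl fun i _ => key_tel i
    rw [heq]
    have h4 := Filter.Tendsto.sub
      (tendsto_const_nhds : Filter.Tendsto (fun _ : ℕ => u 0) Filter.atTop (nhds (u 0)))
      hu_tend
    have h5 : (1 : Lp ℂ 1 (volume.restrict (Set.Ioo a b)) →L[ℂ]
        Lp ℂ 1 (volume.restrict (Set.Ioo a b))) = u 0 - 0 := by rw [sub_zero, hu0]
    rw [h5]
    exact h4
  have hAT : A * T = 1 := by
    have h1 : HasSum (fun n => A * f n) (A * T) :=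
      hT.map (AddMonoidHom.mulLeft A) (continuous_const.mul continuous_id)
    exact tendsto_nhds_unique h1.tendsto_sum_nat htel
  have hTA : T * A = 1 := by
    have h1 : HasSum (fun n => f n * A) (T * A) :=
      hT.map (AddMonoidHom.mulRight A) (continuous_id.mul continuous_const)
    have h1' : HasSum (fun n => A * f n) (T * A) := by
      simpa only [hcomm_fA] using h1
    exact tendsto_nhds_unique h1'.tendsto_sum_nat htel
  refine ⟨T, ?_, ?_, hTnorm⟩
  · intro g
    have hA_apply : z • g - J g = A g := by
      simp only [hAdef, ContinuousLinearMap.sub_apply, ContinuousLinearMap.smul_apply,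
        ContinuousLinearMap.one_apply]
    rw [hA_apply, ← ContinuousLinearMap.mul_apply, hTA, ContinuousLinearMap.one_apply]
  · intro g
    have hA_apply : z • T g - J (T g) = A (T g) := by
      simp only [hAdef, ContinuousLinearMap.sub_apply, ContinuousLinearMap.smul_apply,
        ContinuousLinearMap.one_apply]
    rw [hA_apply, ← ContinuousLinearMap.mul_apply, hAT, ContinuousLinearMap.one_apply]
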